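/- Let ρ and σ be density matrices (positive semidefinite complex d×d matrices of trace 1). Then ½‖ρ−σ‖₁ ≤ p(ρ,σ) ≤ ‖√ρ − √σ‖₂ ≤ √2 · p(ρ,σ) ≤ √2 · √(‖ρ−σ‖₁). -/

import Mathlib

open scoped ComplexOrder

/-- The positive semidefinite square root of a positive semidefinite matrix
(removed from Mathlib; restored with its old definition). -/
noncomputable def Matrix.PosSemidef.sqrt {n 𝕜 : Type*} [Fintype n] [DecidableEq n] [RCLike 𝕜]
    {A : Matrix n n 𝕜} (hA : A.PosSemidef) : Matrix n n 𝕜 :=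
  hA.1.eigenvectorUnitary.1 * Matrix.diagonal ((↑) ∘ (√·) ∘ hA.1.eigenvalues) *
  (star hA.1.eigenvectorUnitary : Matrix n n 𝕜)

namespace QDI

/-- Trace norm `‖A‖₁ = Tr √(AᴴA)` of a complex matrix. -/
noncomputable def traceNorm {d : ℕ} (A : Matrix (Fin d) (Fin d) ℂ) : ℝ :=
  ((Matrix.posSemidef_conjTranspose_mul_self A).sqrt).trace.re

/-- Hilbert–Schmidt (Frobenius) norm `‖A‖₂ = √(Tr(AᴴA))` of a complex matrix. -/
noncomputable def hsNorm {d : ℕ} (A : Matrix (Fin d) (Fin d) ℂ) : ℝ :=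
  Real.sqrt ((A.conjTranspose * A).trace.re)

/-- Fidelity `F(ρ,σ) = ‖√ρ√σ‖₁ = Tr √(√ρ σ √ρ)` of positive semidefinite matrices. -/
noncomputable def fid {d : ℕ} {ρ σ : Matrix (Fin d) (Fin d) ℂ}
    (hρ : ρ.PosSemidef) (hσ : σ.PosSemidef) : ℝ :=
  traceNorm (hρ.sqrt * hσ.sqrt)

end QDI

open QDI Matrix

namespace QDIaux

variable {d : ℕ}

/-! ### Functional calculus helper lemmas -/

section cfc

variable {X : Matrix (Fin d) (Fin d) ℂ} (hX : X.IsHermitian)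

lemma herm_cfc_def (f : ℝ → ℝ) : hX.cfc f = (hX.eigenvectorUnitary : Matrix (Fin d) (Fin d) ℂ) *
    diagonal (RCLike.ofReal ∘ f ∘ hX.eigenvalues) *
    star (hX.eigenvectorUnitary : Matrix (Fin d) (Fin d) ℂ) := rfl

lemma cfc_mul (f g : ℝ → ℝ) :
    hX.cfc f * hX.cfc g = hX.cfc (fun t => f t * g t) := by
  have h : ∀ {a b c e u v : Matrix (Fin d) (Fin d) ℂ},
      (a*b*c)*(u*v*e) = a*(b*(c*u)*v)*e := by intros; simp only [mul_assoc]
  rw [herm_cfc_def, herm_cfc_def, herm_cfc_def, h,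
    Unitary.star_mul_self_of_mem (SetLike.coe_mem _), mul_one, diagonal_mul_diagonal]
  congr 2
  rw [diagonal_eq_diagonal_iff]
  intro i
  simp

lemma cfc_conjTranspose (f : ℝ → ℝ) : (hX.cfc f)ᴴ = hX.cfc f := by
  have hD : star (diagonal (RCLike.ofReal ∘ f ∘ hX.eigenvalues) : Matrix (Fin d) (Fin d) ℂ)
      = diagonal (RCLike.ofReal ∘ f ∘ hX.eigenvalues) := by
    rw [star_eq_conjTranspose, diagonal_conjTranspose, diagonal_eq_diagonal_iff]
    intro i
    simp [Pi.star_def]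
  rw [herm_cfc_def, ← star_eq_conjTranspose, mul_assoc, StarMul.star_mul,
    StarMul.star_mul, star_star, hD, mul_assoc]

lemma cfc_psd (f : ℝ → ℝ) (h : ∀ i, 0 ≤ f (hX.eigenvalues i)) :
    (hX.cfc f).PosSemidef := by
  rw [herm_cfc_def, star_eq_conjTranspose]
  apply PosSemidef.mul_mul_conjTranspose_same
  refine posSemidef_diagonal_iff.mpr fun i => ?_
  simpa using Complex.zero_le_real.2 (h i)

lemma cfc_trace (f : ℝ → ℝ) :
    (hX.cfc f).trace = ((∑ i, f (hX.eigenvalues i) : ℝ) : ℂ) := by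
  rw [herm_cfc_def, Matrix.trace_mul_cycle,
    Unitary.star_mul_self_of_mem (SetLike.coe_mem _), one_mul, trace_diagonal]
  push_cast
  rfl

lemma cfc_congr {f g : ℝ → ℝ} (h : ∀ i, f (hX.eigenvalues i) = g (hX.eigenvalues i)) :
    hX.cfc f = hX.cfc g := by
  rw [herm_cfc_def, herm_cfc_def]
  congr 2
  rw [diagonal_eq_diagonal_iff]
  intro i
  simp [h i]

lemma cfc_id : hX.cfc (fun t => t) = X := hX.spectral_theorem.symm

lemma cfc_one : hX.cfc (fun _ => 1) = 1 := by
  rw [herm_cfc_def]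
  rw [show (RCLike.ofReal ∘ (fun _ : ℝ => (1:ℝ)) ∘ hX.eigenvalues) = fun _ => (1:ℂ) from
    funext fun i => by simp, diagonal_one, mul_one,
    Unitary.mul_star_self_of_mem (SetLike.coe_mem _)]

lemma cfc_sub (f g : ℝ → ℝ) :
    hX.cfc (fun t => f t - g t) = hX.cfc f - hX.cfc g := by
  rw [herm_cfc_def, herm_cfc_def, herm_cfc_def,
    ← sub_mul, ← mul_sub]
  congr 2
  ext i j
  by_cases hij : i = j <;> simp [diagonal_apply, hij]

lemma cfc_add (f g : ℝ → ℝ) :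
    hX.cfc (fun t => f t + g t) = hX.cfc f + hX.cfc g := by
  rw [herm_cfc_def, herm_cfc_def, herm_cfc_def,
    ← add_mul, ← mul_add]
  congr 2
  ext i j
  by_cases hij : i = j <;> simp [diagonal_apply, hij]

lemma cfc_zero : hX.cfc (fun _ => 0) = 0 := by
  have h := cfc_sub hX (fun _ => (1:ℝ)) (fun _ => (1:ℝ))
  simpa using h

end cfc

lemma _root_.Matrix.PosSemidef.posSemidef_sqrt {A : Matrix (Fin d) (Fin d) ℂ}
    (hA : A.PosSemidef) : hA.sqrt.PosSemidef :=
  cfc_psd hA.1 Real.sqrt fun _ => Real.sqrt_nonneg _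

lemma _root_.Matrix.PosSemidef.sqrt_mul_self {A : Matrix (Fin d) (Fin d) ℂ}
    (hA : A.PosSemidef) : hA.sqrt * hA.sqrt = A := by
  change hA.1.cfc Real.sqrt * hA.1.cfc Real.sqrt = A
  rw [cfc_mul]
  conv_rhs => rw [← cfc_id hA.1]
  exact cfc_congr hA.1 fun i => Real.mul_self_sqrt (hA.eigenvalues_nonneg i)

open scoped MatrixOrder in
lemma _root_.Matrix.PosSemidef.eq_sqrt_of_sq_eq {A : Matrix (Fin d) (Fin d) ℂ}
    (hA : A.PosSemidef) {B : Matrix (Fin d) (Fin d) ℂ} (hB : B.PosSemidef) (hAB : A ^ 2 = B) :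
    A = hB.sqrt := by
  have h1 : CFC.sqrt B = A := CFC.sqrt_unique (by rw [← sq, hAB]) hA.nonneg
  have h2 : CFC.sqrt B = hB.sqrt := by
    rw [CFC.sqrt_eq_real_sqrt B hB.nonneg, cfcₙ_eq_cfc, hB.1.cfc_eq]
    rfl
  rw [← h1, h2]

lemma sqrt_eq_cfc {A : Matrix (Fin d) (Fin d) ℂ} (hA : A.PosSemidef) :
    hA.sqrt = hA.1.cfc Real.sqrt := rfl

/-! ### Trace and Hilbert-Schmidt norm basics -/

lemma trace_conjTranspose_mul (A B : Matrix (Fin d) (Fin d) ℂ) :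
    (Aᴴ * B).trace = ∑ p : Fin d × Fin d, (starRingEnd ℂ) (A p.1 p.2) * B p.1 p.2 := by
  rw [Matrix.trace, Fintype.sum_prod_type]
  simp only [Matrix.diag, Matrix.mul_apply, conjTranspose_apply]
  rw [Finset.sum_comm]
  rfl

lemma hs_re_eq (A : Matrix (Fin d) (Fin d) ℂ) :
    (Aᴴ * A).trace.re = ∑ p : Fin d × Fin d, ‖A p.1 p.2‖^2 := by
  rw [trace_conjTranspose_mul, Complex.re_sum]
  refine Finset.sum_congr rfl fun p _ => ?_
  rw [← Complex.normSq_eq_conj_mul_self, Complex.ofReal_re, ← Complex.sq_norm]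

lemma hs_re_nonneg (A : Matrix (Fin d) (Fin d) ℂ) : 0 ≤ (Aᴴ * A).trace.re := by
  rw [hs_re_eq]
  positivity

lemma hsNorm_nonneg (A : Matrix (Fin d) (Fin d) ℂ) : 0 ≤ hsNorm A := Real.sqrt_nonneg _

lemma hsNorm_sq (A : Matrix (Fin d) (Fin d) ℂ) : hsNorm A ^ 2 = (Aᴴ * A).trace.re :=
  Real.sq_sqrt (hs_re_nonneg A)

lemma norm_trace_conjTranspose_mul_le (A B : Matrix (Fin d) (Fin d) ℂ) :
    ‖(Aᴴ * B).trace‖ ≤ hsNorm A * hsNorm B := by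
  let x : EuclideanSpace ℂ (Fin d × Fin d) := WithLp.toLp 2 fun p => A p.1 p.2
  let y : EuclideanSpace ℂ (Fin d × Fin d) := WithLp.toLp 2 fun p => B p.1 p.2
  have htr : (Aᴴ * B).trace = inner (𝕜 := ℂ) x y := by
    rw [trace_conjTranspose_mul, PiLp.inner_apply]
    simp [x, y, mul_comm]
  have hx : ‖x‖ = hsNorm A := by
    rw [EuclideanSpace.norm_eq, hsNorm, hs_re_eq]
  have hy : ‖y‖ = hsNorm B := by
    rw [EuclideanSpace.norm_eq, hsNorm, hs_re_eq]
  rw [htr, ← hx, ← hy]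
  exact norm_inner_le_norm x y

lemma re_trace_conjTranspose_mul_le (A B : Matrix (Fin d) (Fin d) ℂ) :
    ((Aᴴ * B).trace).re ≤ hsNorm A * hsNorm B :=
  (Complex.re_le_norm _).trans (norm_trace_conjTranspose_mul_le A B)

lemma psd_trace_re_nonneg {A : Matrix (Fin d) (Fin d) ℂ} (hA : A.PosSemidef) :
    0 ≤ A.trace.re := by
  have h : ∀ i, 0 ≤ (A i i).re := by
    intro i
    have h0 := hA.dotProduct_mulVec_nonneg (Pi.single i 1)
    have h2 : star (Pi.single i 1) ⬝ᵥ A.mulVec (Pi.single i 1) = A i i := by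
      simp [dotProduct, Matrix.mulVec, Pi.single_apply, Finset.mul_sum]
    rw [h2] at h0
    exact (Complex.le_def.mp h0).1
  rw [show A.trace = ∑ i, A i i from rfl, Complex.re_sum]
  exact Finset.sum_nonneg fun i _ => h i

lemma psd_mul_trace_re_nonneg {A B : Matrix (Fin d) (Fin d) ℂ}
    (hA : A.PosSemidef) (hB : B.PosSemidef) : 0 ≤ ((A * B).trace).re := by
  have hS := hA.posSemidef_sqrt
  have h1 : A * B = hA.sqrt * (hA.sqrt * B) := by rw [← mul_assoc, hA.sqrt_mul_self]
  rw [h1, Matrix.trace_mul_comm]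
  have h2 : hA.sqrt * B * hA.sqrt = hA.sqrt * B * hA.sqrtᴴ := by rw [hS.1.eq]
  rw [h2]
  exact psd_trace_re_nonneg (hB.mul_mul_conjTranspose_same hA.sqrt)

lemma hsNorm_conjTranspose (A : Matrix (Fin d) (Fin d) ℂ) : hsNorm Aᴴ = hsNorm A := by
  rw [hsNorm, hsNorm, conjTranspose_conjTranspose, Matrix.trace_mul_comm]

lemma hsNorm_conjTranspose_mul_le {K : Matrix (Fin d) (Fin d) ℂ}
    (hK : (1 - K * Kᴴ).PosSemidef) (Z : Matrix (Fin d) (Fin d) ℂ) :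
    hsNorm (Kᴴ * Z) ≤ hsNorm Z := by
  rw [← hsNorm_conjTranspose Z]
  apply Real.sqrt_le_sqrt
  simp only [conjTranspose_mul, conjTranspose_conjTranspose]
  have he : (Zᴴ * K * (Kᴴ * Z)).trace = ((Z * Zᴴ) * (K * Kᴴ)).trace := by
    rw [show Zᴴ * K * (Kᴴ * Z) = Zᴴ * ((K * Kᴴ) * Z) by noncomm_ring,
      Matrix.trace_mul_comm,
      show (K * Kᴴ) * Z * Zᴴ = (K * Kᴴ) * (Z * Zᴴ) by noncomm_ring,
      Matrix.trace_mul_comm]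
  have hd : Z * Zᴴ - (Z * Zᴴ) * (K * Kᴴ) = (Z * Zᴴ) * (1 - K * Kᴴ) := by noncomm_ring
  have hpsd : 0 ≤ (((Z * Zᴴ) * (1 - K * Kᴴ)).trace).re :=
    psd_mul_trace_re_nonneg (Matrix.posSemidef_self_mul_conjTranspose Z) hK
  have h2 := congrArg (fun M : Matrix (Fin d) (Fin d) ℂ => (M.trace).re) hd
  simp only [Matrix.trace_sub, Complex.sub_re] at h2
  rw [he]
  linarith

lemma hsNorm_mul_le_right {K : Matrix (Fin d) (Fin d) ℂ}
    (hK : (1 - K * Kᴴ).PosSemidef) (Z : Matrix (Fin d) (Fin d) ℂ) :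
    hsNorm (Z * K) ≤ hsNorm Z := by
  apply Real.sqrt_le_sqrt
  have he : ((Z * K)ᴴ * (Z * K)).trace = ((Zᴴ * Z) * (K * Kᴴ)).trace := by
    simp only [conjTranspose_mul]
    rw [show Kᴴ * Zᴴ * (Z * K) = Kᴴ * ((Zᴴ * Z) * K) by noncomm_ring,
      Matrix.trace_mul_comm, Matrix.mul_assoc]
  have hd : Zᴴ * Z - (Zᴴ * Z) * (K * Kᴴ) = (Zᴴ * Z) * (1 - K * Kᴴ) := by noncomm_ring
  have hpsd : 0 ≤ (((Zᴴ * Z) * (1 - K * Kᴴ)).trace).re :=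
    psd_mul_trace_re_nonneg (Matrix.posSemidef_conjTranspose_mul_self Z) hK
  have := congrArg (fun M : Matrix (Fin d) (Fin d) ℂ => (M.trace).re) hd
  simp only [Matrix.trace_sub, Complex.sub_re] at this
  rw [he]
  linarith

/-! ### Trace norm basics -/

lemma traceNorm_nonneg (M : Matrix (Fin d) (Fin d) ℂ) : 0 ≤ traceNorm M :=
  psd_trace_re_nonneg (Matrix.posSemidef_conjTranspose_mul_self M).posSemidef_sqrt

/-- Singular-value-type data for `M`: a sub-isometry `K` realizing the trace norm. -/
lemma exists_K (M : Matrix (Fin d) (Fin d) ℂ) :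
    ∃ K : Matrix (Fin d) (Fin d) ℂ,
      (M * K).trace = ((traceNorm M : ℝ) : ℂ) ∧
      M = Kᴴ * (Matrix.posSemidef_conjTranspose_mul_self M).sqrt ∧
      (1 - K * Kᴴ).PosSemidef ∧ (1 - Kᴴ * K).PosSemidef := by
  classical
  set hA := Matrix.posSemidef_conjTranspose_mul_self M with hAdef
  have h : (Mᴴ * M).IsHermitian := hA.1
  have heig : ∀ i, 0 ≤ h.eigenvalues i := hA.eigenvalues_nonneg
  set f : ℝ → ℝ := fun t => if 0 < t then (Real.sqrt t)⁻¹ else 0 with hfdef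
  set g : ℝ → ℝ := fun t => if 0 < t then 1 else 0 with hgdef
  have hpt1 : ∀ i, f (h.eigenvalues i) * h.eigenvalues i * f (h.eigenvalues i)
      = g (h.eigenvalues i) := by
    intro i
    rcases (heig i).lt_or_eq with h0 | h0
    · have hs : Real.sqrt (h.eigenvalues i) ≠ 0 := ne_of_gt (Real.sqrt_pos.mpr h0)
      simp only [hfdef, hgdef, if_pos h0]
      field_simp
      rw [Real.sq_sqrt (le_of_lt h0)]
    · simp only [hfdef, hgdef, ← h0]
      norm_num
  have hpt2 : ∀ i, (f (h.eigenvalues i) * f (h.eigenvalues i)) * h.eigenvalues i *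
      (f (h.eigenvalues i) * f (h.eigenvalues i))
      = f (h.eigenvalues i) * f (h.eigenvalues i) := by
    intro i
    rcases (heig i).lt_or_eq with h0 | h0
    · have hs : Real.sqrt (h.eigenvalues i) ≠ 0 := ne_of_gt (Real.sqrt_pos.mpr h0)
      simp only [hfdef, if_pos h0]
      field_simp
      rw [Real.sq_sqrt (le_of_lt h0)]
      try ring
    · simp only [hfdef, ← h0]
      norm_num
  have hpt3 : ∀ i, (1 - g (h.eigenvalues i)) * h.eigenvalues i * (1 - g (h.eigenvalues i))
      = 0 := by
    intro i
    rcases (heig i).lt_or_eq with h0 | h0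
    · simp only [hgdef, if_pos h0]
      ring
    · simp only [hgdef, ← h0]
      norm_num
  have hpt4 : ∀ i, f (h.eigenvalues i) * Real.sqrt (h.eigenvalues i) = g (h.eigenvalues i) := by
    intro i
    rcases (heig i).lt_or_eq with h0 | h0
    · have hs : Real.sqrt (h.eigenvalues i) ≠ 0 := ne_of_gt (Real.sqrt_pos.mpr h0)
      simp only [hfdef, hgdef, if_pos h0]
      field_simp
    · simp only [hfdef, hgdef, ← h0]
      norm_num
  have hpt5 : ∀ i, g (h.eigenvalues i) * Real.sqrt (h.eigenvalues i)
      = Real.sqrt (h.eigenvalues i) := by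
    intro i
    rcases (heig i).lt_or_eq with h0 | h0
    · simp only [hgdef, if_pos h0]
      ring
    · simp only [hgdef, ← h0]
      norm_num
  -- the sub-isometry K
  have hFH : (h.cfc f)ᴴ = h.cfc f := cfc_conjTranspose h f
  have hKH : (h.cfc f * Mᴴ)ᴴ = M * h.cfc f := by
    rw [conjTranspose_mul, conjTranspose_conjTranspose, hFH]
  have hKKH : (h.cfc f * Mᴴ) * (h.cfc f * Mᴴ)ᴴ = h.cfc g := by
    rw [hKH]
    calc h.cfc f * Mᴴ * (M * h.cfc f) = h.cfc f * h.cfc (fun t => t) * h.cfc f := by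
          rw [cfc_id h]; noncomm_ring
    _ = h.cfc (fun t => f t * t * f t) := by rw [cfc_mul, cfc_mul]
    _ = h.cfc g := cfc_congr h hpt1
  have hpsd1 : (1 - (h.cfc f * Mᴴ) * (h.cfc f * Mᴴ)ᴴ).PosSemidef := by
    rw [hKKH, ← cfc_one h, ← cfc_sub]
    refine cfc_psd h _ fun i => ?_
    simp only [hgdef]
    split <;> norm_num
  have hKHK : (h.cfc f * Mᴴ)ᴴ * (h.cfc f * Mᴴ) = M * h.cfc (fun t => f t * f t) * Mᴴ := by
    rw [hKH, ← cfc_mul]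
    noncomm_ring
  have hPH : (M * h.cfc (fun t => f t * f t) * Mᴴ)ᴴ = M * h.cfc (fun t => f t * f t) * Mᴴ := by
    simp only [conjTranspose_mul, conjTranspose_conjTranspose, cfc_conjTranspose]
    noncomm_ring
  have hPP : (M * h.cfc (fun t => f t * f t) * Mᴴ) * (M * h.cfc (fun t => f t * f t) * Mᴴ)
      = M * h.cfc (fun t => f t * f t) * Mᴴ := by
    calc (M * h.cfc (fun t => f t * f t) * Mᴴ) * (M * h.cfc (fun t => f t * f t) * Mᴴ)
        = M * (h.cfc (fun t => f t * f t) * h.cfc (fun t => t) * h.cfc (fun t => f t * f t))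
            * Mᴴ := by rw [cfc_id h]; noncomm_ring
    _ = M * h.cfc (fun t => (f t * f t) * t * (f t * f t)) * Mᴴ := by rw [cfc_mul, cfc_mul]
    _ = M * h.cfc (fun t => f t * f t) * Mᴴ := by
          rw [cfc_congr h (f := fun t => (f t * f t) * t * (f t * f t))
            (g := fun t => f t * f t) hpt2]
  have hpsd2 : (1 - (h.cfc f * Mᴴ)ᴴ * (h.cfc f * Mᴴ)).PosSemidef := by
    rw [hKHK]
    have h1 : (1 - M * h.cfc (fun t => f t * f t) * Mᴴ)ᴴ
        = 1 - M * h.cfc (fun t => f t * f t) * Mᴴ := by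
      simp only [conjTranspose_sub, conjTranspose_one, hPH]
    have hid : 1 - M * h.cfc (fun t => f t * f t) * Mᴴ
        = (1 - M * h.cfc (fun t => f t * f t) * Mᴴ)ᴴ
          * (1 - M * h.cfc (fun t => f t * f t) * Mᴴ) := by
      rw [h1]
      calc 1 - M * h.cfc (fun t => f t * f t) * Mᴴ
          = 1 - M * h.cfc (fun t => f t * f t) * Mᴴ - M * h.cfc (fun t => f t * f t) * Mᴴ
            + (M * h.cfc (fun t => f t * f t) * Mᴴ) * (M * h.cfc (fun t => f t * f t) * Mᴴ) := by
            rw [hPP]; noncomm_ring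
      _ = (1 - M * h.cfc (fun t => f t * f t) * Mᴴ)
            * (1 - M * h.cfc (fun t => f t * f t) * Mᴴ) := by noncomm_ring
    rw [hid]
    exact Matrix.posSemidef_conjTranspose_mul_self _
  have hsqrt : hA.sqrt = h.cfc Real.sqrt := rfl
  have hMg : M * h.cfc g = M := by
    have hz : M * h.cfc (fun t => 1 - g t) = 0 := by
      rw [← Matrix.conjTranspose_mul_self_eq_zero]
      calc (M * h.cfc (fun t => 1 - g t))ᴴ * (M * h.cfc (fun t => 1 - g t))
          = h.cfc (fun t => 1 - g t) * h.cfc (fun t => t) * h.cfc (fun t => 1 - g t) := by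
            simp only [conjTranspose_mul, cfc_conjTranspose, cfc_id h]
            noncomm_ring
      _ = h.cfc (fun t => (1 - g t) * t * (1 - g t)) := by rw [cfc_mul, cfc_mul]
      _ = h.cfc (fun _ => 0) := cfc_congr h hpt3
      _ = 0 := cfc_zero h
    have hsub := cfc_sub h (fun _ => 1) g
    rw [hsub, cfc_one, Matrix.mul_sub, mul_one, sub_eq_zero] at hz
    exact hz.symm
  have hMdec : M = (h.cfc f * Mᴴ)ᴴ * hA.sqrt := by
    rw [hKH, hsqrt, Matrix.mul_assoc, cfc_mul, cfc_congr h hpt4, hMg]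
  have htr : (M * (h.cfc f * Mᴴ)).trace = ((traceNorm M : ℝ) : ℂ) := by
    have h1 : M * (h.cfc f * Mᴴ) = (h.cfc f * Mᴴ)ᴴ * hA.sqrt * (h.cfc f * Mᴴ) := by
      rw [← hMdec]
    rw [h1, Matrix.trace_mul_cycle, hKKH, hsqrt, cfc_mul, cfc_congr h hpt5, cfc_trace]
    have h2 : traceNorm M = ((h.cfc Real.sqrt).trace).re := by
      rw [traceNorm, hsqrt]
    rw [h2, cfc_trace]
    simp
  exact ⟨h.cfc f * Mᴴ, htr, hMdec, hpsd1, hpsd2⟩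

lemma re_trace_mul_le_traceNorm (M C : Matrix (Fin d) (Fin d) ℂ)
    (hC : (1 - C * Cᴴ).PosSemidef) : ((M * C).trace).re ≤ traceNorm M := by
  obtain ⟨K, hKtr, hMdec, hKK1, hKK2⟩ := exists_K M
  set hA := Matrix.posSemidef_conjTranspose_mul_self M with hAdef
  have h : (Mᴴ * M).IsHermitian := hA.1
  have hsqrt : hA.sqrt = h.cfc Real.sqrt := rfl
  set R : Matrix (Fin d) (Fin d) ℂ := h.cfc (fun t => Real.sqrt (Real.sqrt t)) with hRdef
  have hRH : Rᴴ = R := cfc_conjTranspose h _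
  have hRR : R * R = hA.sqrt := by
    rw [hRdef, cfc_mul, hsqrt]
    exact cfc_congr h fun i => Real.mul_self_sqrt (Real.sqrt_nonneg _)
  have h1 : M * C = (R * K)ᴴ * (R * C) := by
    rw [conjTranspose_mul, hRH, hMdec, show Kᴴ * R * (R * C) = Kᴴ * (R * R) * C by
      noncomm_ring, hRR]
  have h2 : ((M * C).trace).re ≤ hsNorm (R * K) * hsNorm (R * C) := by
    rw [h1]
    exact re_trace_conjTranspose_mul_le _ _
  have h3 : hsNorm (R * K) ^ 2 = traceNorm M := by
    rw [hsNorm_sq, conjTranspose_mul, hRH,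
      show Kᴴ * R * (R * K) = Kᴴ * (R * R) * K by noncomm_ring, hRR, ← hMdec, hKtr]
    simp
  have h4 : hsNorm (R * C) ^ 2 ≤ traceNorm M := by
    rw [hsNorm_sq, conjTranspose_mul, hRH,
      show Cᴴ * R * (R * C) = Cᴴ * (R * R) * C by noncomm_ring, hRR]
    have he : (Cᴴ * hA.sqrt * C).trace = (hA.sqrt * (C * Cᴴ)).trace := by
      rw [Matrix.trace_mul_cycle, ← Matrix.mul_assoc, Matrix.trace_mul_comm,
        Matrix.mul_assoc]
    have hd : hA.sqrt - hA.sqrt * (C * Cᴴ) = hA.sqrt * (1 - C * Cᴴ) := by noncomm_ring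
    have hpsd : 0 ≤ ((hA.sqrt * (1 - C * Cᴴ)).trace).re :=
      psd_mul_trace_re_nonneg hA.posSemidef_sqrt hC
    have h5 := congrArg (fun N : Matrix (Fin d) (Fin d) ℂ => (N.trace).re) hd
    simp only [Matrix.trace_sub, Complex.sub_re] at h5
    have h6 : traceNorm M = ((hA.sqrt).trace).re := rfl
    rw [he]
    linarith
  have hRK : hsNorm (R * K) = Real.sqrt (traceNorm M) := by
    rw [← h3, Real.sqrt_sq (hsNorm_nonneg _)]
  have hRC : hsNorm (R * C) ≤ Real.sqrt (traceNorm M) := by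
    rw [show hsNorm (R * C) = Real.sqrt (hsNorm (R * C) ^ 2) from
      (Real.sqrt_sq (hsNorm_nonneg _)).symm]
    exact Real.sqrt_le_sqrt h4
  calc ((M * C).trace).re ≤ hsNorm (R * K) * hsNorm (R * C) := h2
  _ ≤ Real.sqrt (traceNorm M) * Real.sqrt (traceNorm M) := by
      rw [hRK]
      exact mul_le_mul_of_nonneg_left hRC (Real.sqrt_nonneg _)
  _ = traceNorm M := Real.mul_self_sqrt (traceNorm_nonneg M)

lemma re_trace_le_traceNorm (M : Matrix (Fin d) (Fin d) ℂ) : (M.trace).re ≤ traceNorm M := by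
  have h := re_trace_mul_le_traceNorm M 1
    (by simpa using (Matrix.PosSemidef.zero (n := Fin d) (R := ℂ)))
  simpa using h


/-! ### Norm-one facts for density matrices -/

lemma hsNorm_sqrt_one {ρ : Matrix (Fin d) (Fin d) ℂ} (hρ : ρ.PosSemidef)
    (hρ1 : ρ.trace = 1) : hsNorm hρ.sqrt = 1 := by
  rw [hsNorm, hρ.posSemidef_sqrt.1.eq, hρ.sqrt_mul_self, hρ1]
  norm_num

lemma trace_sq_diff {ρ σ : Matrix (Fin d) (Fin d) ℂ} (hρ : ρ.PosSemidef) (hρ1 : ρ.trace = 1)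
    (hσ : σ.PosSemidef) (hσ1 : σ.trace = 1) :
    (((hρ.sqrt - hσ.sqrt) * (hρ.sqrt - hσ.sqrt)).trace).re
      = 2 - 2 * ((hρ.sqrt * hσ.sqrt).trace).re := by
  have hexp : (hρ.sqrt - hσ.sqrt) * (hρ.sqrt - hσ.sqrt)
      = ρ + σ - (hρ.sqrt * hσ.sqrt + hσ.sqrt * hρ.sqrt) := by
    calc (hρ.sqrt - hσ.sqrt) * (hρ.sqrt - hσ.sqrt)
        = hρ.sqrt * hρ.sqrt + hσ.sqrt * hσ.sqrt
          - (hρ.sqrt * hσ.sqrt + hσ.sqrt * hρ.sqrt) := by noncomm_ring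
    _ = _ := by rw [hρ.sqrt_mul_self, hσ.sqrt_mul_self]
  rw [hexp, Matrix.trace_sub, Matrix.trace_add, Matrix.trace_add, hρ1, hσ1,
    Matrix.trace_mul_comm hσ.sqrt hρ.sqrt]
  simp only [Complex.sub_re, Complex.add_re, Complex.one_re]
  ring

/-! ### The measurement bound -/

set_option maxHeartbeats 1000000 in
lemma term_bound {R S K P : Matrix (Fin d) (Fin d) ℂ} (hR : R.PosSemidef) (hS : S.PosSemidef)
    (hKK : (1 - Kᴴ * K).PosSemidef) (hP : P.PosSemidef) (hPH : Pᴴ = P) (hPP : P * P = P) :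
    ((hS.sqrt * K * (hR.sqrt * P)).trace).re
      ≤ Real.sqrt ((S * P).trace).re * Real.sqrt ((R * P).trace).re := by
  have hSH : hS.sqrtᴴ = hS.sqrt := hS.posSemidef_sqrt.1.eq
  have hRH : hR.sqrtᴴ = hR.sqrt := hR.posSemidef_sqrt.1.eq
  -- rewrite the trace in `Aᴴ * B` form
  have htr : (hS.sqrt * K * (hR.sqrt * P)).trace
      = ((hS.sqrt * P)ᴴ * (K * (hR.sqrt * P))).trace := by
    rw [conjTranspose_mul, hSH, hPH]
    calc (hS.sqrt * K * (hR.sqrt * P)).trace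
        = ((hS.sqrt * K * (hR.sqrt * P)) * P).trace := by
          rw [show (hS.sqrt * K * (hR.sqrt * P)) * P = hS.sqrt * K * (hR.sqrt * (P * P)) by
            noncomm_ring, hPP]
    _ = (P * (hS.sqrt * K * (hR.sqrt * P))).trace := by rw [Matrix.trace_mul_comm]
    _ = (P * hS.sqrt * (K * (hR.sqrt * P))).trace := by rw [show
          P * (hS.sqrt * K * (hR.sqrt * P)) = P * hS.sqrt * (K * (hR.sqrt * P)) by noncomm_ring]
  -- first factor
  have h1 : hsNorm (hS.sqrt * P) = Real.sqrt ((S * P).trace).re := by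
    have hm : (hS.sqrt * P)ᴴ * (hS.sqrt * P) = P * (S * P) := by
      rw [conjTranspose_mul, hSH, hPH, show P * hS.sqrt * (hS.sqrt * P)
        = P * ((hS.sqrt * hS.sqrt) * P) by noncomm_ring, hS.sqrt_mul_self]
    have harg : ((hS.sqrt * P)ᴴ * (hS.sqrt * P)).trace = (S * P).trace := by
      rw [hm, Matrix.trace_mul_comm, show (S * P) * P = S * (P * P) by noncomm_ring, hPP]
    rw [hsNorm, harg]
  -- second factor
  have h2 : (hsNorm (K * (hR.sqrt * P)))^2 ≤ ((R * P).trace).re := by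
    rw [hsNorm_sq]
    have hm : (K * (hR.sqrt * P))ᴴ * (K * (hR.sqrt * P))
        = (P * hR.sqrt) * (Kᴴ * K) * (hR.sqrt * P) := by
      rw [conjTranspose_mul, conjTranspose_mul, hRH, hPH]
      noncomm_ring
    have htr2 : ((P * hR.sqrt) * (Kᴴ * K) * (hR.sqrt * P)).trace
        = ((Kᴴ * K) * (hR.sqrt * P * hR.sqrt)).trace := by
      rw [Matrix.trace_mul_cycle, show (hR.sqrt * P) * (P * hR.sqrt) * (Kᴴ * K)
        = (hR.sqrt * (P * P) * hR.sqrt) * (Kᴴ * K) by noncomm_ring, hPP,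
        Matrix.trace_mul_comm]
    have hpsd2 : (hR.sqrt * P * hR.sqrt).PosSemidef := by
      have := hP.mul_mul_conjTranspose_same hR.sqrt
      rwa [hRH] at this
    have hpsd : 0 ≤ (((1 - Kᴴ * K) * (hR.sqrt * P * hR.sqrt)).trace).re :=
      psd_mul_trace_re_nonneg hKK hpsd2
    have hd : (hR.sqrt * P * hR.sqrt) - (Kᴴ * K) * (hR.sqrt * P * hR.sqrt)
        = (1 - Kᴴ * K) * (hR.sqrt * P * hR.sqrt) := by noncomm_ring
    have hd2 := congrArg (fun N : Matrix (Fin d) (Fin d) ℂ => (N.trace).re) hd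
    simp only [Matrix.trace_sub, Complex.sub_re] at hd2
    have htr3 : (hR.sqrt * P * hR.sqrt).trace = (R * P).trace := by
      rw [Matrix.trace_mul_cycle, hR.sqrt_mul_self]
    rw [show ((K * (hR.sqrt * P))ᴴ * (K * (hR.sqrt * P))).trace
      = ((Kᴴ * K) * (hR.sqrt * P * hR.sqrt)).trace by rw [hm, htr2]]
    have htr3' := congrArg Complex.re htr3
    linarith
  calc ((hS.sqrt * K * (hR.sqrt * P)).trace).re
      = (((hS.sqrt * P)ᴴ * (K * (hR.sqrt * P))).trace).re := by rw [htr]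
  _ ≤ hsNorm (hS.sqrt * P) * hsNorm (K * (hR.sqrt * P)) := re_trace_conjTranspose_mul_le _ _
  _ ≤ Real.sqrt ((S * P).trace).re * Real.sqrt ((R * P).trace).re := by
      rw [h1]
      refine mul_le_mul_of_nonneg_left ?_ (Real.sqrt_nonneg _)
      rw [show hsNorm (K * (hR.sqrt * P)) = Real.sqrt ((hsNorm (K * (hR.sqrt * P)))^2) from
        (Real.sqrt_sq (hsNorm_nonneg _)).symm]
      exact Real.sqrt_le_sqrt h2

/-! ### Elementary numeric inequality -/

lemma numeric {p q F T : ℝ} (hp0 : 0 ≤ p) (hp1 : p ≤ 1) (hq0 : 0 ≤ q) (hq1 : q ≤ 1)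
    (hF0 : 0 ≤ F) (hT0 : 0 ≤ T)
    (hF : F ≤ Real.sqrt q * Real.sqrt p + Real.sqrt (1 - q) * Real.sqrt (1 - p))
    (hpq : p - q = (1/2) * T) : (1/2 : ℝ) * T ≤ Real.sqrt (1 - F ^ 2) := by
  have ha := Real.sq_sqrt hp0
  have hb := Real.sq_sqrt hq0
  have hc := Real.sq_sqrt (by linarith : (0:ℝ) ≤ 1 - p)
  have he := Real.sq_sqrt (by linarith : (0:ℝ) ≤ 1 - q)
  have ha0 := Real.sqrt_nonneg p
  have hb0 := Real.sqrt_nonneg q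
  have hc0 := Real.sqrt_nonneg (1 - p)
  have he0 := Real.sqrt_nonneg (1 - q)
  have h2 : F ^ 2 ≤ 1 - (p - q) ^ 2 := by
    nlinarith [sq_nonneg (Real.sqrt p * Real.sqrt (1 - p) - Real.sqrt q * Real.sqrt (1 - q)),
      sq_nonneg (Real.sqrt q * Real.sqrt p + Real.sqrt (1 - q) * Real.sqrt (1 - p))]
  have h3 : ((1/2 : ℝ) * T) ^ 2 ≤ 1 - F ^ 2 := by rw [← hpq]; linarith
  calc (1/2 : ℝ) * T = Real.sqrt (((1/2 : ℝ) * T) ^ 2) := by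
        rw [Real.sqrt_sq (by linarith)]
  _ ≤ Real.sqrt (1 - F ^ 2) := Real.sqrt_le_sqrt h3

/-! ### Powers–Størmer inequality -/

lemma powers_stormer {ρ σ : Matrix (Fin d) (Fin d) ℂ} (hρ : ρ.PosSemidef) (hρ1 : ρ.trace = 1)
    (hσ : σ.PosSemidef) (hσ1 : σ.trace = 1) :
    2 - 2 * ((hρ.sqrt * hσ.sqrt).trace).re ≤ traceNorm (ρ - σ) := by
  have hXH : (hρ.sqrt - hσ.sqrt).IsHermitian := hρ.posSemidef_sqrt.1.sub hσ.posSemidef_sqrt.1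
  set sgn : ℝ → ℝ := fun t => if 0 ≤ t then 1 else -1 with hsgndef
  set C : Matrix (Fin d) (Fin d) ℂ := hXH.cfc sgn with hCdef
  set G : Matrix (Fin d) (Fin d) ℂ := hXH.cfc (fun t => |t|) with hGdef
  have hCH : Cᴴ = C := cfc_conjTranspose hXH sgn
  have hCC : C * Cᴴ = 1 := by
    rw [hCH, hCdef, cfc_mul, ← cfc_one hXH]
    refine cfc_congr hXH fun i => ?_
    simp only [hsgndef]
    split <;> norm_num
  have hCpos : (1 - C * Cᴴ).PosSemidef := by
    rw [hCC, sub_self]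
    exact Matrix.PosSemidef.zero
  -- `C * X = X * C = G`
  have hCX : C * (hρ.sqrt - hσ.sqrt) = G := by
    calc C * (hρ.sqrt - hσ.sqrt) = hXH.cfc sgn * hXH.cfc (fun t => t) := by rw [cfc_id hXH]
    _ = hXH.cfc (fun t => sgn t * t) := cfc_mul hXH _ _
    _ = G := by
        refine cfc_congr hXH fun i => ?_
        simp only [hsgndef]
        split_ifs with h0
        · rw [one_mul, abs_of_nonneg h0]
        · rw [abs_of_neg (lt_of_not_ge h0)]; ring
  have hXC : (hρ.sqrt - hσ.sqrt) * C = G := by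
    calc (hρ.sqrt - hσ.sqrt) * C = hXH.cfc (fun t => t) * hXH.cfc sgn := by rw [cfc_id hXH]
    _ = hXH.cfc (fun t => t * sgn t) := cfc_mul hXH _ _
    _ = G := by
        refine cfc_congr hXH fun i => ?_
        simp only [hsgndef]
        split_ifs with h0
        · rw [mul_one, abs_of_nonneg h0]
        · rw [abs_of_neg (lt_of_not_ge h0)]; ring
  -- key trace identity : ((ρ - σ) * C).trace = (Y * G).trace with Y = √ρ + √σ
  have hXY : (hρ.sqrt - hσ.sqrt) * (hρ.sqrt + hσ.sqrt) + (hρ.sqrt + hσ.sqrt) *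
      (hρ.sqrt - hσ.sqrt) = (ρ - σ) + (ρ - σ) := by
    calc (hρ.sqrt - hσ.sqrt) * (hρ.sqrt + hσ.sqrt) + (hρ.sqrt + hσ.sqrt) *
        (hρ.sqrt - hσ.sqrt)
        = (hρ.sqrt * hρ.sqrt - hσ.sqrt * hσ.sqrt) + (hρ.sqrt * hρ.sqrt
          - hσ.sqrt * hσ.sqrt) := by noncomm_ring
    _ = _ := by rw [hρ.sqrt_mul_self, hσ.sqrt_mul_self]
  have htr1 : ((ρ - σ) * C).trace + ((ρ - σ) * C).trace
      = ((hρ.sqrt + hσ.sqrt) * G).trace + ((hρ.sqrt + hσ.sqrt) * G).trace := by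
    have h1 : ((ρ - σ) * C).trace + ((ρ - σ) * C).trace
        = (((hρ.sqrt - hσ.sqrt) * (hρ.sqrt + hσ.sqrt)) * C).trace
          + (((hρ.sqrt + hσ.sqrt) * (hρ.sqrt - hσ.sqrt)) * C).trace := by
      rw [← Matrix.trace_add, ← Matrix.trace_add, ← add_mul, ← add_mul, hXY]
    rw [h1]
    congr 1
    · rw [Matrix.mul_assoc, Matrix.trace_mul_comm, Matrix.mul_assoc, hCX]
    · rw [Matrix.mul_assoc, hXC]
  have htr2 : ((ρ - σ) * C).trace = ((hρ.sqrt + hσ.sqrt) * G).trace := by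
    have h2 : (2 : ℂ) * ((ρ - σ) * C).trace = 2 * ((hρ.sqrt + hσ.sqrt) * G).trace := by
      rw [two_mul, two_mul, htr1]
    exact mul_left_cancel₀ two_ne_zero h2
  -- lower bound on (Y * G).trace
  have hGmX : (G - (hρ.sqrt - hσ.sqrt)).PosSemidef := by
    have he : G - (hρ.sqrt - hσ.sqrt) = hXH.cfc (fun t => |t| - t) := by
      calc G - (hρ.sqrt - hσ.sqrt)
          = hXH.cfc (fun t => |t|) - hXH.cfc (fun t => t) := by rw [cfc_id hXH]
      _ = hXH.cfc (fun t => |t| - t) := (cfc_sub hXH _ _).symm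
    rw [he]
    refine cfc_psd hXH _ fun i => ?_
    simp [sub_nonneg, le_abs_self]
  have hGpX : (G + (hρ.sqrt - hσ.sqrt)).PosSemidef := by
    have he : G + (hρ.sqrt - hσ.sqrt) = hXH.cfc (fun t => |t| + t) := by
      calc G + (hρ.sqrt - hσ.sqrt)
          = hXH.cfc (fun t => |t|) + hXH.cfc (fun t => t) := by rw [cfc_id hXH]
      _ = hXH.cfc (fun t => |t| + t) := (cfc_add hXH _ _).symm
    rw [he]
    refine cfc_psd hXH _ fun i => ?_
    have := neg_abs_le (hXH.eigenvalues i)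
    linarith
  have hdecomp : (hρ.sqrt + hσ.sqrt) * G
      - (hρ.sqrt - hσ.sqrt) * (hρ.sqrt - hσ.sqrt)
      = hρ.sqrt * (G - (hρ.sqrt - hσ.sqrt)) + hσ.sqrt * (G + (hρ.sqrt - hσ.sqrt)) := by
    noncomm_ring
  have hlow : (((hρ.sqrt - hσ.sqrt) * (hρ.sqrt - hσ.sqrt)).trace).re
      ≤ (((hρ.sqrt + hσ.sqrt) * G).trace).re := by
    have h3 : 0 ≤ ((hρ.sqrt * (G - (hρ.sqrt - hσ.sqrt))).trace).re :=
      psd_mul_trace_re_nonneg hρ.posSemidef_sqrt hGmX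
    have h4 : 0 ≤ ((hσ.sqrt * (G + (hρ.sqrt - hσ.sqrt))).trace).re :=
      psd_mul_trace_re_nonneg hσ.posSemidef_sqrt hGpX
    have h5 := congrArg (fun N : Matrix (Fin d) (Fin d) ℂ => (N.trace).re) hdecomp
    simp only [Matrix.trace_sub, Matrix.trace_add, Complex.sub_re, Complex.add_re] at h5
    linarith
  have hup : (((ρ - σ) * C).trace).re ≤ traceNorm (ρ - σ) :=
    re_trace_mul_le_traceNorm _ _ hCpos
  have hsq := trace_sq_diff hρ hρ1 hσ hσ1
  have htr2re := congrArg Complex.re htr2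
  linarith

/-! ### Fuchs–van de Graaf -/

lemma fvg {ρ σ : Matrix (Fin d) (Fin d) ℂ} (hρ : ρ.PosSemidef) (hρ1 : ρ.trace = 1)
    (hσ : σ.PosSemidef) (hσ1 : σ.trace = 1) :
    (1/2 : ℝ) * traceNorm (ρ - σ) ≤ Real.sqrt (1 - fid hρ hσ ^ 2) := by
  have hXH : (ρ - σ).IsHermitian := hρ.1.sub hσ.1
  set ind : ℝ → ℝ := fun t => if 0 ≤ t then 1 else 0 with hinddef
  set P : Matrix (Fin d) (Fin d) ℂ := hXH.cfc ind with hPdef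
  have hP : P.PosSemidef := by
    refine cfc_psd hXH _ fun i => ?_
    simp only [hinddef]
    split <;> norm_num
  have hPH : Pᴴ = P := cfc_conjTranspose hXH ind
  have hPP : P * P = P := by
    rw [hPdef, cfc_mul]
    refine cfc_congr hXH fun i => ?_
    simp only [hinddef]
    split <;> norm_num
  have hP' : (1 - P).PosSemidef := by
    rw [hPdef, ← cfc_one hXH, ← cfc_sub]
    refine cfc_psd hXH _ fun i => ?_
    simp only [hinddef]
    split <;> norm_num
  have hP'H : (1 - P)ᴴ = 1 - P := by rw [conjTranspose_sub, conjTranspose_one, hPH]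
  have hP'P : (1 - P) * (1 - P) = 1 - P := by
    calc (1 - P) * (1 - P) = 1 - P - P + P * P := by noncomm_ring
    _ = 1 - P := by rw [hPP]; noncomm_ring
  -- eigenvalue bookkeeping
  have htr0 : (ρ - σ).trace = 0 := by rw [Matrix.trace_sub, hρ1, hσ1, sub_self]
  have hsum0 : ∑ i, hXH.eigenvalues i = 0 := by
    have h1 : (ρ - σ).trace = ((∑ i, hXH.eigenvalues i : ℝ) : ℂ) := by
      conv_lhs => rw [← cfc_id hXH]
      rw [cfc_trace]
    rw [htr0] at h1
    exact_mod_cast h1.symm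
  have hTabs : traceNorm (ρ - σ) = ∑ i, |hXH.eigenvalues i| := by
    have habs : hXH.cfc (fun t => |t|)
        = (Matrix.posSemidef_conjTranspose_mul_self (ρ - σ)).sqrt := by
      refine PosSemidef.eq_sqrt_of_sq_eq (cfc_psd hXH _ fun i => abs_nonneg _)
        (Matrix.posSemidef_conjTranspose_mul_self (ρ - σ)) ?_
      calc (hXH.cfc fun t => |t|) ^ 2 = hXH.cfc (fun t => |t| * |t|) := by
            rw [pow_two, cfc_mul]
      _ = hXH.cfc (fun t => t * t) := cfc_congr hXH fun i => abs_mul_abs_self _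
      _ = hXH.cfc (fun t => t) * hXH.cfc (fun t => t) := (cfc_mul hXH _ _).symm
      _ = (ρ - σ)ᴴ * (ρ - σ) := by rw [cfc_id hXH, hXH.eq]
    rw [traceNorm, ← habs, cfc_trace]
    simp
  have hPX : ((ρ - σ) * P).trace
      = ((∑ i, (if 0 ≤ hXH.eigenvalues i then hXH.eigenvalues i else 0) : ℝ) : ℂ) := by
    have h1 : (ρ - σ) * P = hXH.cfc (fun t => if 0 ≤ t then t else 0) := by
      calc (ρ - σ) * P = hXH.cfc (fun t => t) * hXH.cfc ind := by rw [cfc_id hXH]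
      _ = hXH.cfc (fun t => t * ind t) := cfc_mul hXH _ _
      _ = hXH.cfc (fun t => if 0 ≤ t then t else 0) := by
          refine cfc_congr hXH fun i => ?_
          simp only [hinddef]
          split <;> ring
    rw [h1, cfc_trace]
  have hhalf : (∑ i, (if 0 ≤ hXH.eigenvalues i then hXH.eigenvalues i else 0) : ℝ)
      = (1/2 : ℝ) * traceNorm (ρ - σ) := by
    have h1 : ∀ i, (if 0 ≤ hXH.eigenvalues i then hXH.eigenvalues i else 0)
        = (|hXH.eigenvalues i| + hXH.eigenvalues i) / 2 := by
      intro i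
      rcases le_or_gt 0 (hXH.eigenvalues i) with h0 | h0
      · rw [if_pos h0, abs_of_nonneg h0]; ring
      · rw [if_neg (not_le.mpr h0), abs_of_neg h0]; ring
    rw [Finset.sum_congr rfl fun i _ => h1 i, hTabs, ← Finset.sum_div,
      Finset.sum_add_distrib, hsum0, add_zero]
    ring
  -- probabilities
  set p : ℝ := ((ρ * P).trace).re with hpdef
  set q : ℝ := ((σ * P).trace).re with hqdef
  have hdiff : p - q = (1/2 : ℝ) * traceNorm (ρ - σ) := by
    have h1 : ((ρ - σ) * P).trace = (ρ * P).trace - (σ * P).trace := by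
      rw [Matrix.sub_mul, Matrix.trace_sub]
    have h2 := congrArg Complex.re h1
    rw [hPX] at h2
    simp only [Complex.ofReal_re, Complex.sub_re] at h2
    rw [hpdef, hqdef, ← h2, hhalf]
  have hp0 : 0 ≤ p := psd_mul_trace_re_nonneg hρ hP
  have hq0 : 0 ≤ q := psd_mul_trace_re_nonneg hσ hP
  have hp1' : ((ρ * (1 - P)).trace).re = 1 - p := by
    have h1 : ρ * (1 - P) = ρ - ρ * P := by rw [Matrix.mul_sub, mul_one]
    rw [h1, Matrix.trace_sub, Complex.sub_re, hρ1]
    simp [hpdef]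
  have hq1' : ((σ * (1 - P)).trace).re = 1 - q := by
    have h1 : σ * (1 - P) = σ - σ * P := by rw [Matrix.mul_sub, mul_one]
    rw [h1, Matrix.trace_sub, Complex.sub_re, hσ1]
    simp [hqdef]
  have hp1 : p ≤ 1 := by
    have := psd_mul_trace_re_nonneg hρ hP'
    rw [hp1'] at this
    linarith
  have hq1 : q ≤ 1 := by
    have := psd_mul_trace_re_nonneg hσ hP'
    rw [hq1'] at this
    linarith
  -- fidelity bound
  obtain ⟨K, hKtr, hMdec, hKK1, hKK2⟩ := exists_K (hρ.sqrt * hσ.sqrt)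
  have hFre : fid hρ hσ = (((hρ.sqrt * hσ.sqrt) * K).trace).re := by
    rw [hKtr]
    simp [fid]
  have hsplit : ((hρ.sqrt * hσ.sqrt) * K).trace
      = (hσ.sqrt * K * (hρ.sqrt * P)).trace + (hσ.sqrt * K * (hρ.sqrt * (1 - P))).trace := by
    rw [← Matrix.trace_add,
      show hσ.sqrt * K * (hρ.sqrt * P) + hσ.sqrt * K * (hρ.sqrt * (1 - P))
        = hσ.sqrt * K * hρ.sqrt by noncomm_ring,
      show (hρ.sqrt * hσ.sqrt) * K = hρ.sqrt * (hσ.sqrt * K) from Matrix.mul_assoc _ _ _,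
      Matrix.trace_mul_comm]
  have hb1 := term_bound hρ hσ hKK2 hP hPH hPP
  have hb2 := term_bound hρ hσ hKK2 hP' hP'H hP'P
  rw [hq1', hp1'] at hb2
  have hFle : fid hρ hσ ≤ Real.sqrt q * Real.sqrt p
      + Real.sqrt (1 - q) * Real.sqrt (1 - p) := by
    have h2 := congrArg Complex.re hsplit
    simp only [Complex.add_re] at h2
    rw [hFre, h2]
    exact add_le_add hb1 hb2
  exact numeric hp0 hp1 hq0 hq1 (traceNorm_nonneg _) (traceNorm_nonneg _) hFle hdiff

end QDIaux

open QDIaux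

set_option maxHeartbeats 2000000 in
/-- Lemma (Fuchs–van de Graaf type relations between the trace distance, the purified distance
`p(ρ,σ) = √(1 − F(ρ,σ)²)` and the Hilbert–Schmidt distance of matrix square roots):
`½‖ρ−σ‖₁ ≤ p(ρ,σ) ≤ ‖√ρ − √σ‖₂ ≤ √2·p(ρ,σ) ≤ √2·√‖ρ−σ‖₁` for density matrices `ρ, σ`. -/
theorem stmt18 {d : ℕ} (ρ σ : Matrix (Fin d) (Fin d) ℂ)
    (hρ : ρ.PosSemidef) (hρ1 : ρ.trace = 1)
    (hσ : σ.PosSemidef) (hσ1 : σ.trace = 1) :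
    (1 / 2 : ℝ) * traceNorm (ρ - σ) ≤ Real.sqrt (1 - fid hρ hσ ^ 2) ∧
    Real.sqrt (1 - fid hρ hσ ^ 2) ≤ hsNorm (hρ.sqrt - hσ.sqrt) ∧
    hsNorm (hρ.sqrt - hσ.sqrt) ≤ Real.sqrt 2 * Real.sqrt (1 - fid hρ hσ ^ 2) ∧
    Real.sqrt 2 * Real.sqrt (1 - fid hρ hσ ^ 2) ≤
      Real.sqrt 2 * Real.sqrt (traceNorm (ρ - σ)) := by
  have hT0 : 0 ≤ traceNorm (ρ - σ) := traceNorm_nonneg _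
  have hF0 : 0 ≤ fid hρ hσ := traceNorm_nonneg _
  have ht0 : 0 ≤ ((hρ.sqrt * hσ.sqrt).trace).re :=
    psd_mul_trace_re_nonneg hρ.posSemidef_sqrt hσ.posSemidef_sqrt
  -- t ≤ F
  have htF : ((hρ.sqrt * hσ.sqrt).trace).re ≤ fid hρ hσ :=
    re_trace_le_traceNorm (hρ.sqrt * hσ.sqrt)
  -- F² ≤ t
  have hFt : fid hρ hσ ^ 2 ≤ ((hρ.sqrt * hσ.sqrt).trace).re := by
    obtain ⟨K, hKtr, hMdec, hKK1, hKK2⟩ := exists_K (hρ.sqrt * hσ.sqrt)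
    have hAq : hρ.posSemidef_sqrt.sqrt * hρ.posSemidef_sqrt.sqrt = hρ.sqrt :=
      hρ.posSemidef_sqrt.sqrt_mul_self
    have hBq : hσ.posSemidef_sqrt.sqrt * hσ.posSemidef_sqrt.sqrt = hσ.sqrt :=
      hσ.posSemidef_sqrt.sqrt_mul_self
    have hAqH : hρ.posSemidef_sqrt.sqrtᴴ = hρ.posSemidef_sqrt.sqrt :=
      hρ.posSemidef_sqrt.posSemidef_sqrt.1.eq
    have hBqH : hσ.posSemidef_sqrt.sqrtᴴ = hσ.posSemidef_sqrt.sqrt :=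
      hσ.posSemidef_sqrt.posSemidef_sqrt.1.eq
    set Aq := hρ.posSemidef_sqrt.sqrt
    set Bq := hσ.posSemidef_sqrt.sqrt
    have hFre : fid hρ hσ = (((hρ.sqrt * hσ.sqrt) * K).trace).re := by
      rw [hKtr]
      simp [fid]
    have hsplit : ((hρ.sqrt * hσ.sqrt) * K).trace
        = (((Bq * Aq)ᴴ) * (Bq * (K * Aq))).trace := by
      rw [conjTranspose_mul, hAqH, hBqH, ← hAq, ← hBq,
        show Aq * Aq * (Bq * Bq) * K = Aq * (Aq * (Bq * Bq) * K) by noncomm_ring,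
        Matrix.trace_mul_comm,
        show Aq * (Bq * Bq) * K * Aq = Aq * Bq * (Bq * (K * Aq)) by noncomm_ring]
    have hcs : fid hρ hσ ≤ hsNorm (Bq * Aq) * hsNorm (Bq * (K * Aq)) := by
      rw [hFre, hsplit]
      exact re_trace_conjTranspose_mul_le _ _
    have h1 : hsNorm (Bq * Aq) = Real.sqrt (((hρ.sqrt * hσ.sqrt).trace).re) := by
      have harg : ((Bq * Aq)ᴴ * (Bq * Aq)).trace = ((hρ.sqrt * hσ.sqrt)).trace := by
        rw [conjTranspose_mul, hAqH, hBqH,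
          show Aq * Bq * (Bq * Aq) = Aq * (Bq * Bq) * Aq by noncomm_ring,
          Matrix.trace_mul_cycle, hAq, hBq]
      rw [hsNorm, harg]
    have h2 : hsNorm (Bq * (K * Aq)) ≤ 1 := by
      have hWmH : (Kᴴ * (hσ.sqrt * K))ᴴ = Kᴴ * (hσ.sqrt * K) := by
        rw [conjTranspose_mul, conjTranspose_mul, conjTranspose_conjTranspose,
          hσ.posSemidef_sqrt.1.eq]
        noncomm_ring
      have hsq : hsNorm (Bq * (K * Aq)) ^ 2 ≤ 1 := by
        rw [hsNorm_sq]
        have harg : ((Bq * (K * Aq))ᴴ * (Bq * (K * Aq))).trace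
            = (((Kᴴ * (hσ.sqrt * K))ᴴ) * hρ.sqrt).trace := by
          rw [hWmH, conjTranspose_mul, conjTranspose_mul, hAqH, hBqH, ← hAq, ← hBq]
          rw [show Aq * Kᴴ * Bq * (Bq * (K * Aq))
              = Aq * (Kᴴ * (Bq * Bq * K) * Aq) by noncomm_ring,
            Matrix.trace_mul_comm,
            show Kᴴ * (Bq * Bq * K) * Aq * Aq = Kᴴ * (Bq * Bq * K) * (Aq * Aq) by
              noncomm_ring]
        rw [harg]
        have hle := re_trace_conjTranspose_mul_le (Kᴴ * (hσ.sqrt * K)) hρ.sqrt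
        have hw1 : hsNorm (Kᴴ * (hσ.sqrt * K)) ≤ 1 := by
          calc hsNorm (Kᴴ * (hσ.sqrt * K)) ≤ hsNorm (hσ.sqrt * K) :=
                hsNorm_conjTranspose_mul_le hKK1 _
          _ ≤ hsNorm hσ.sqrt := hsNorm_mul_le_right hKK1 _
          _ = 1 := hsNorm_sqrt_one hσ hσ1
        have hw2 : hsNorm hρ.sqrt = 1 := hsNorm_sqrt_one hρ hρ1
        calc (((Kᴴ * (hσ.sqrt * K))ᴴ * hρ.sqrt).trace).re
            ≤ hsNorm (Kᴴ * (hσ.sqrt * K)) * hsNorm hρ.sqrt := hle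
        _ ≤ 1 * 1 := by
            rw [hw2]
            simpa using hw1
        _ = 1 := by norm_num
      nlinarith [hsNorm_nonneg (Bq * (K * Aq))]
    have hFle : fid hρ hσ ≤ Real.sqrt (((hρ.sqrt * hσ.sqrt).trace).re) := by
      calc fid hρ hσ ≤ hsNorm (Bq * Aq) * hsNorm (Bq * (K * Aq)) := hcs
      _ ≤ hsNorm (Bq * Aq) * 1 := by
          refine mul_le_mul_of_nonneg_left h2 (hsNorm_nonneg _)
      _ = Real.sqrt (((hρ.sqrt * hσ.sqrt).trace).re) := by rw [mul_one, h1]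
    calc fid hρ hσ ^ 2 ≤ Real.sqrt (((hρ.sqrt * hσ.sqrt).trace).re) ^ 2 := by
          exact pow_le_pow_left₀ hF0 hFle 2
    _ = ((hρ.sqrt * hσ.sqrt).trace).re := Real.sq_sqrt ht0
  -- H² = 2 - 2t
  have hH2 : hsNorm (hρ.sqrt - hσ.sqrt) ^ 2 = 2 - 2 * ((hρ.sqrt * hσ.sqrt).trace).re := by
    rw [hsNorm_sq,
      show (hρ.sqrt - hσ.sqrt)ᴴ = hρ.sqrt - hσ.sqrt from
        (hρ.posSemidef_sqrt.1.sub hσ.posSemidef_sqrt.1).eq,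
      trace_sq_diff hρ hρ1 hσ hσ1]
  have hH0 : 0 ≤ hsNorm (hρ.sqrt - hσ.sqrt) := hsNorm_nonneg _
  have hPS : 2 - 2 * ((hρ.sqrt * hσ.sqrt).trace).re ≤ traceNorm (ρ - σ) :=
    powers_stormer hρ hρ1 hσ hσ1
  refine ⟨fvg hρ hρ1 hσ hσ1, ?_, ?_, ?_⟩
  · -- √(1-F²) ≤ H
    have h2 : 1 - fid hρ hσ ^ 2 ≤ hsNorm (hρ.sqrt - hσ.sqrt) ^ 2 := by
      rw [hH2]
      nlinarith [sq_nonneg (1 - fid hρ hσ)]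
    calc Real.sqrt (1 - fid hρ hσ ^ 2) ≤ Real.sqrt (hsNorm (hρ.sqrt - hσ.sqrt) ^ 2) :=
          Real.sqrt_le_sqrt h2
    _ = hsNorm (hρ.sqrt - hσ.sqrt) := Real.sqrt_sq hH0
  · -- H ≤ √2·√(1-F²)
    have h2 : hsNorm (hρ.sqrt - hσ.sqrt) ^ 2 ≤ 2 * (1 - fid hρ hσ ^ 2) := by
      rw [hH2]
      nlinarith [hFt]
    calc hsNorm (hρ.sqrt - hσ.sqrt) = Real.sqrt (hsNorm (hρ.sqrt - hσ.sqrt) ^ 2) :=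
          (Real.sqrt_sq hH0).symm
    _ ≤ Real.sqrt (2 * (1 - fid hρ hσ ^ 2)) := Real.sqrt_le_sqrt h2
    _ = Real.sqrt 2 * Real.sqrt (1 - fid hρ hσ ^ 2) := Real.sqrt_mul (by norm_num) _
  · -- √2·√(1-F²) ≤ √2·√T
    refine mul_le_mul_of_nonneg_left ?_ (Real.sqrt_nonneg 2)
    apply Real.sqrt_le_sqrt
    nlinarith [sq_nonneg (1 - fid hρ hσ), htF, hPS]
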